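/- Define a map from semistandard sl(3)-tableaux of shape (a,b) to quasi-standard tableaux by repeatedly applying the push operation (removing a trivial first column [1] or [1;2] and re-justifying) until the result is quasi-standard. This map is a bijection from the set of semistandard tableaux of shape (a,b) onto the disjoint union over all a' ≤ a, b' ≤ b of quasi-standard tableaux of shape (a',b'). -/

import Mathlib

namespace Stmt11

/-- A two-row semistandard Young tableau with entries in `Fin n` and shape
`(a,b)`: first row of length `a + b`, second row of length `b`. -/
def SSYT (n a b : ℕ) (r1 : Fin (a + b) → Fin n) (r2 : Fin b → Fin n) : Prop :=
  Monotone r1 ∧ Monotone r2 ∧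
    ∀ i : Fin b, r1 ⟨i.1, lt_of_lt_of_le i.2 (Nat.le_add_left b a)⟩ < r2 i

/-- Two-row tableaux with entries in `{1,2,3}`, of arbitrary shape. -/
def Tab3 : Type := Σ a b : ℕ, (Fin (a + b) → Fin 3) × (Fin b → Fin 3)

/-- The first column of the tableau is the trivial column `[1;2]`
(0-indexed `(0,1)`). -/
def TrivCol (x : Tab3) : Prop :=
  ∃ hb : 0 < x.2.1, x.2.2.1 ⟨0, by omega⟩ = 0 ∧ x.2.2.2 ⟨0, hb⟩ = 1

/-- The top-left entry is `1` and pushing the first row one step to the left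
(deleting the leading `1`) produces a semistandard tableau of shape
`(a-1, b)`. -/
def RowPush (x : Tab3) : Prop :=
  0 < x.1 ∧ (∃ h0 : 0 < x.1 + x.2.1, x.2.2.1 ⟨0, h0⟩ = 0) ∧
    ∀ i : Fin x.2.1, ∀ hi : i.1 + 1 < x.1 + x.2.1,
      x.2.2.1 ⟨i.1 + 1, hi⟩ < x.2.2.2 i

/-- `x` admits a push producing a semistandard tableau. -/
def Pushable (x : Tab3) : Prop := TrivCol x ∨ RowPush x

open Classical in
/-- The push operation: delete a leading trivial column `[1;2]`, or delete a
leading `1` in the first row and shift that row to the left; if no push is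
possible, do nothing. -/
noncomputable def pushStep (x : Tab3) : Tab3 :=
  if h : TrivCol x then
    ⟨x.1, x.2.1 - 1,
      fun j => x.2.2.1 ⟨j.1 + 1, by obtain ⟨hb, -⟩ := h; omega⟩,
      fun j => x.2.2.2 ⟨j.1 + 1, by obtain ⟨hb, -⟩ := h; omega⟩⟩
  else if h2 : RowPush x then
    ⟨x.1 - 1, x.2.1,
      fun j => x.2.2.1 ⟨j.1 + 1, by obtain ⟨ha, -⟩ := h2; omega⟩,
      fun j => x.2.2.2 ⟨j.1, by omega⟩⟩
  else x

/-- `x` is semistandard (as an element of `Tab3`). -/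
def SSYT' (x : Tab3) : Prop := SSYT 3 x.1 x.2.1 x.2.2.1 x.2.2.2

/-- `x` is quasi-standard: semistandard, and no push produces a semistandard
tableau. -/
def QS' (x : Tab3) : Prop := SSYT' x ∧ ¬ Pushable x

def padF (m k : ℕ) (f : Fin k → Fin 3) (c : Fin 3) : Fin m → Fin 3 :=
  fun j => if h : j.1 + k < m then c else f ⟨j.1 + k - m, by have := j.2; omega⟩

def G (a b : ℕ) (S : Tab3) : Tab3 :=
  ⟨a, b, padF (a + b) (S.1 + S.2.1) S.2.2.1 0, padF b S.2.1 S.2.2.2 1⟩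


lemma push_triv {x : Tab3} (h : TrivCol x) :
    pushStep x = ⟨x.1, x.2.1 - 1,
      fun j => x.2.2.1 ⟨j.1 + 1, by obtain ⟨hb, -⟩ := h; omega⟩,
      fun j => x.2.2.2 ⟨j.1 + 1, by obtain ⟨hb, -⟩ := h; omega⟩⟩ := by
  unfold pushStep; exact dif_pos h

lemma push_row {x : Tab3} (h : ¬ TrivCol x) (h2 : RowPush x) :
    pushStep x = ⟨x.1 - 1, x.2.1,
      fun j => x.2.2.1 ⟨j.1 + 1, by obtain ⟨ha, -⟩ := h2; omega⟩,
      fun j => x.2.2.2 ⟨j.1, by omega⟩⟩ := by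
  unfold pushStep; exact (dif_neg h).trans (dif_pos h2)

lemma push_not {x : Tab3} (h : ¬ Pushable x) : pushStep x = x := by
  unfold pushStep
  exact (dif_neg fun h' => h (Or.inl h')).trans (dif_neg fun h' => h (Or.inr h'))

lemma push_fix_iter {x : Tab3} (h : ¬ Pushable x) (n : ℕ) : pushStep^[n] x = x := by
  induction n with
  | zero => rfl
  | succ n ih => rw [Function.iterate_succ_apply, push_not h, ih]

lemma push_shape (x : Tab3) : (pushStep x).1 ≤ x.1 ∧ (pushStep x).2.1 ≤ x.2.1 := by
  by_cases ht : TrivCol x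
  · rw [push_triv ht]; exact ⟨le_refl _, Nat.sub_le _ _⟩
  · by_cases hr : RowPush x
    · rw [push_row ht hr]; exact ⟨Nat.sub_le _ _, le_refl _⟩
    · rw [push_not (by simp [Pushable, ht, hr])]; exact ⟨le_refl _, le_refl _⟩

lemma push_measure {x : Tab3} (h : Pushable x) :
    (pushStep x).1 + (pushStep x).2.1 + 1 = x.1 + x.2.1 := by
  by_cases ht : TrivCol x
  · have hb := ht.1
    rw [push_triv ht]; show x.1 + (x.2.1 - 1) + 1 = _; omega
  · have hr : RowPush x := h.resolve_left ht
    have ha := hr.1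
    rw [push_row ht hr]; show (x.1 - 1) + x.2.1 + 1 = _; omega

lemma ssyt_push {x : Tab3} (h : SSYT' x) : SSYT' (pushStep x) := by
  obtain ⟨a, b, f1, f2⟩ := x
  obtain ⟨h1, h2, h3⟩ := h
  dsimp only at h1 h2 h3
  by_cases ht : TrivCol (⟨a, b, f1, f2⟩ : Tab3)
  · have hb := ht.1
    rw [push_triv ht]
    refine ⟨fun i j hij => h1 ?_, fun i j hij => h2 ?_, fun i => ?_⟩
    · exact Fin.mk_le_mk.mpr (by omega)
    · exact Fin.mk_le_mk.mpr (by omega)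
    · have hi : i.1 < b - 1 := i.2
      exact h3 ⟨i.1 + 1, by omega⟩
  · by_cases hr : RowPush (⟨a, b, f1, f2⟩ : Tab3)
    · have ha := hr.1
      have hcol := hr.2.2
      rw [push_row ht hr]
      refine ⟨fun i j hij => h1 ?_, fun i j hij => h2 ?_, fun i => ?_⟩
      · exact Fin.mk_le_mk.mpr (by omega)
      · exact Fin.mk_le_mk.mpr (by have := Fin.le_def.mp hij; omega)
      · exact hcol ⟨i.1, i.2⟩ (by omega)
    · rw [push_not (x := ⟨a, b, f1, f2⟩) (by simp [Pushable, ht, hr])]; exact ⟨h1, h2, h3⟩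

lemma iter_qs {x : Tab3} : ∀ n, SSYT' x → x.1 + x.2.1 ≤ n → QS' (pushStep^[n] x) := by
  intro n
  induction n generalizing x with
  | zero =>
    intro hs hm
    simp only [Function.iterate_zero_apply]
    refine ⟨hs, ?_⟩
    rintro (⟨hb, -⟩ | ⟨ha, -⟩) <;> omega
  | succ n ih =>
    intro hs hm
    by_cases hp : Pushable x
    · rw [Function.iterate_succ_apply]
      exact ih (ssyt_push hs) (by have := push_measure hp; omega)
    · rw [push_fix_iter hp]; exact ⟨hs, hp⟩

lemma iter_shape (x : Tab3) (n : ℕ) :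
    (pushStep^[n] x).1 ≤ x.1 ∧ (pushStep^[n] x).2.1 ≤ x.2.1 := by
  induction n with
  | zero => exact ⟨le_refl _, le_refl _⟩
  | succ n ih =>
    rw [Function.iterate_succ_apply']
    have := push_shape (pushStep^[n] x)
    exact ⟨le_trans this.1 ih.1, le_trans this.2 ih.2⟩

lemma tab_ext {a b : ℕ} {f1 g1 : Fin (a + b) → Fin 3} {f2 g2 : Fin b → Fin 3}
    (h1 : f1 = g1) (h2 : f2 = g2) : (⟨a, b, f1, f2⟩ : Tab3) = ⟨a, b, g1, g2⟩ := by
  rw [h1, h2]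

lemma tab_inj {a b : ℕ} {p q : (Fin (a + b) → Fin 3) × (Fin b → Fin 3)}
    (h : (⟨a, b, p⟩ : Tab3) = ⟨a, b, q⟩) : p = q := by
  injection h with h1 h2
  injection h2 with h3 h4

lemma G_self (S : Tab3) : G S.1 S.2.1 S = S := by
  obtain ⟨a', b', f1, f2⟩ := S
  unfold G
  apply tab_ext <;> funext j <;> unfold padF
  · rw [dif_neg (by omega)]
    exact congrArg f1 (Fin.ext (by simp))
  · rw [dif_neg (by omega)]
    exact congrArg f2 (Fin.ext (by simp))

lemma G_push (a b : ℕ) (x : Tab3) : G a b (pushStep x) = G a b x := by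
  obtain ⟨a'', b'', f1, f2⟩ := x
  by_cases ht : TrivCol (⟨a'', b'', f1, f2⟩ : Tab3)
  · obtain ⟨hb, e1, e2⟩ := id ht
    have hb' : 0 < b'' := hb
    rw [push_triv ht]
    unfold G
    dsimp only
    apply tab_ext <;> funext j <;> unfold padF
    · split_ifs with hA hB hB
      · rfl
      · symm; convert e1 using 3; omega
      · omega
      · exact congrArg f1 (Fin.ext (by simp; omega))
    · split_ifs with hA hB hB
      · rfl
      · symm; convert e2 using 3; omega
      · omega
      · exact congrArg f2 (Fin.ext (by simp; omega))
  · by_cases hr : RowPush (⟨a'', b'', f1, f2⟩ : Tab3)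
    · obtain ⟨ha, ⟨h0, e1⟩, -⟩ := id hr
      have ha' : 0 < a'' := ha
      rw [push_row ht hr]
      unfold G
      dsimp only
      apply tab_ext <;> funext j <;> unfold padF
      · split_ifs with hA hB hB
        · rfl
        · symm; convert e1 using 3; omega
        · omega
        · exact congrArg f1 (Fin.ext (by simp; omega))
      · split_ifs with hA
        · rfl
        · rfl
    · rw [push_not (x := ⟨a'', b'', f1, f2⟩) (by simp [Pushable, ht, hr])]

lemma G_iter (a b : ℕ) (x : Tab3) (n : ℕ) : G a b (pushStep^[n] x) = G a b x := by
  induction n with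
  | zero => rfl
  | succ n ih => rw [Function.iterate_succ_apply', G_push, ih]

lemma fin_congr {k : ℕ} (f : Fin k → Fin 3) {x y : ℕ} {px : x < k} {py : y < k}
    (h : x = y) : f ⟨x, px⟩ = f ⟨y, py⟩ := by subst h; rfl

lemma zero_lt_of {x : Fin 3} (h : 1 ≤ x.1) : (0 : Fin 3) < x := by
  rw [Fin.lt_def]; show 0 < x.1; omega

lemma one_le_of {x : Fin 3} (h : 1 ≤ x.1) : (1 : Fin 3) ≤ x := by
  rw [Fin.le_def]; simpa using h

lemma ssyt_G {a b : ℕ} {S : Tab3} (h : SSYT' S) (ha : S.1 ≤ a) (hb : S.2.1 ≤ b) :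
    SSYT' (G a b S) := by
  obtain ⟨a', b', f1, f2⟩ := S
  obtain ⟨h1, h2, h3⟩ := h
  dsimp only at h1 h2 h3 ha hb
  have hpos : ∀ i : Fin b', (1 : ℕ) ≤ (f2 i).1 := fun i => by
    have := h3 i; rw [Fin.lt_def] at this; omega
  refine ⟨?_, ?_, ?_⟩ <;> dsimp only [G]
  · intro u v huv
    have huv' := Fin.le_def.mp huv
    unfold padF
    split_ifs with hU hV hV
    · exact le_refl _
    · exact Fin.zero_le _
    · omega
    · exact h1 (Fin.mk_le_mk.mpr (by omega))
  · intro u v huv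
    have huv' := Fin.le_def.mp huv
    unfold padF
    split_ifs with hU hV hV
    · exact le_refl _
    · exact one_le_of (hpos _)
    · omega
    · exact h2 (Fin.mk_le_mk.mpr (by omega))
  · intro i
    unfold padF
    dsimp only
    split_ifs with hU hV hV
    · decide
    · exact zero_lt_of (hpos _)
    · omega
    · refine lt_of_le_of_lt (h1 ?_) (h3 ⟨i.1 + b' - b, by omega⟩)
      rw [Fin.mk_le_mk]
      dsimp only
      omega

lemma pull_col {a b : ℕ} {S : Tab3} (ha : S.1 ≤ a) (hb : S.2.1 < b) :
    pushStep (G a b S) = G a (b - 1) S := by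
  obtain ⟨a', b', f1, f2⟩ := S
  dsimp only at ha hb
  have ht : TrivCol (G a b ⟨a', b', f1, f2⟩) := by
    refine ⟨show 0 < b by omega, ?_, ?_⟩
    · show padF (a + b) (a' + b') f1 0 ⟨0, by omega⟩ = 0
      unfold padF; dsimp only; rw [dif_pos (by omega)]
    · show padF b b' f2 1 ⟨0, by omega⟩ = 1
      unfold padF; dsimp only; rw [dif_pos (by omega)]
  rw [push_triv ht]
  unfold G
  dsimp only
  apply tab_ext <;> funext j <;> unfold padF <;> dsimp only
  · by_cases hB : j.1 + (a' + b') < a + (b - 1)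
    · rw [dif_pos hB, dif_pos (show j.1 + 1 + (a' + b') < a + b by omega)]
    · rw [dif_neg hB, dif_neg (show ¬(j.1 + 1 + (a' + b') < a + b) by omega)]
      exact fin_congr f1 (by omega)
  · by_cases hB : j.1 + b' < b - 1
    · rw [dif_pos hB, dif_pos (show j.1 + 1 + b' < b by omega)]
    · rw [dif_neg hB, dif_neg (show ¬(j.1 + 1 + b' < b) by omega)]
      exact fin_congr f2 (by omega)

lemma pull_row {a : ℕ} {S : Tab3} (hS : SSYT' S) (hnt : ¬ TrivCol S) (ha : S.1 < a) :
    pushStep (G a S.2.1 S) = G (a - 1) S.2.1 S := by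
  obtain ⟨a', b', f1, f2⟩ := S
  obtain ⟨h1, h2, h3⟩ := hS
  dsimp only at h1 h2 h3 ha hnt
  have hpos : ∀ i : Fin b', (1 : ℕ) ≤ (f2 i).1 := fun i => by
    have := h3 i; rw [Fin.lt_def] at this; omega
  have hnt' : ¬ TrivCol (G a b' ⟨a', b', f1, f2⟩) := by
    rintro ⟨hb0, e1, e2⟩
    have hb0' : 0 < b' := hb0
    have e2' : f2 ⟨0, hb0'⟩ = 1 := by
      have h := e2
      unfold G padF at h
      dsimp only at h
      rw [dif_neg (by omega)] at h
      rw [← h]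
      exact (fin_congr f2 (by omega)).symm
    have hf1 : f1 ⟨0, by omega⟩ = 0 := by
      have hcol := h3 ⟨0, hb0'⟩
      rw [e2', Fin.lt_def] at hcol
      exact Fin.ext (by simpa using hcol)
    exact hnt ⟨hb0', hf1, e2'⟩
  have hrp : RowPush (G a b' ⟨a', b', f1, f2⟩) := by
    refine ⟨show 0 < a by omega, ⟨show 0 < a + b' by omega, ?_⟩, ?_⟩
    · show padF (a + b') (a' + b') f1 0 ⟨0, by omega⟩ = 0
      unfold padF; dsimp only; rw [dif_pos (by omega)]
    · intro i hi
      have hi' : i.1 < b' := i.2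
      show padF (a + b') (a' + b') f1 0 ⟨i.1 + 1, hi⟩ < padF b' b' f2 1 i
      have hR : padF b' b' f2 1 i = f2 ⟨i.1, hi'⟩ := by
        unfold padF
        rw [dif_neg (by omega)]
        exact fin_congr f2 (by omega)
      rw [hR]
      unfold padF
      dsimp only
      split_ifs with hA
      · exact zero_lt_of (hpos _)
      · refine lt_of_le_of_lt (h1 ?_) (h3 ⟨i.1, hi'⟩)
        rw [Fin.mk_le_mk]
        dsimp only
        omega
  rw [push_row hnt' hrp]
  unfold G
  dsimp only
  apply tab_ext <;> funext j <;> unfold padF <;> (try dsimp only)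
  · by_cases hB : j.1 + (a' + b') < (a - 1) + b'
    · rw [dif_pos hB, dif_pos (show j.1 + 1 + (a' + b') < a + b' by omega)]
    · rw [dif_neg hB, dif_neg (show ¬(j.1 + 1 + (a' + b') < a + b') by omega)]
      exact fin_congr f1 (by omega)

lemma pull_iter {S : Tab3} (hq : QS' S) :
    ∀ n a b, S.1 ≤ a → S.2.1 ≤ b → (a - S.1) + (b - S.2.1) ≤ n →
      pushStep^[n] (G a b S) = S := by
  intro n
  induction n with
  | zero =>
    intro a b ha hb hn
    have ha' : a = S.1 := by omega
    have hb' : b = S.2.1 := by omega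
    simp only [Function.iterate_zero_apply]
    rw [ha', hb']
    exact G_self S
  | succ n ih =>
    intro a b ha hb hn
    by_cases hbb : S.2.1 < b
    · rw [Function.iterate_succ_apply, pull_col ha hbb]
      exact ih a (b - 1) ha (by omega) (by omega)
    · have hb2 : b = S.2.1 := by omega
      by_cases haa : S.1 < a
      · rw [Function.iterate_succ_apply, hb2,
          pull_row hq.1 (fun h => hq.2 (Or.inl h)) haa]
        exact ih (a - 1) S.2.1 (by omega) (le_refl _) (by omega)
      · have ha2 : a = S.1 := by omega
        rw [ha2, hb2, G_self]
        exact push_fix_iter hq.2 (n + 1)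

/-- Repeatedly pushing a semistandard `sl(3)`-tableau of shape `(a,b)` until
the result is quasi-standard defines a bijection from the set of semistandard
tableaux of shape `(a,b)` onto the disjoint union, over all `a' ≤ a`,
`b' ≤ b`, of the quasi-standard tableaux of shape `(a',b')`. -/
theorem push_bijection_sl3 (a b : ℕ) :
    ∃ e : {T : (Fin (a + b) → Fin 3) × (Fin b → Fin 3) // SSYT 3 a b T.1 T.2} ≃
        {S : Tab3 // S.1 ≤ a ∧ S.2.1 ≤ b ∧ QS' S},
      ∀ T, (e T : Tab3) = pushStep^[a + b] ⟨a, b, T.1⟩ := by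
  refine ⟨⟨fun T => ⟨pushStep^[a + b] ⟨a, b, T.1⟩, ?_, ?_, ?_⟩,
          fun S => ⟨(G a b S.1).2.2, ?_⟩, ?_, ?_⟩, fun T => rfl⟩
  · exact (iter_shape (⟨a, b, T.1⟩ : Tab3) (a + b)).1
  · exact (iter_shape (⟨a, b, T.1⟩ : Tab3) (a + b)).2
  · exact iter_qs (a + b) T.2 (le_refl _)
  · exact ssyt_G S.2.2.2.1 S.2.1 S.2.2.1
  · intro T
    apply Subtype.ext
    have h := (G_iter a b (⟨a, b, T.1⟩ : Tab3) (a + b)).trans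
      (G_self (⟨a, b, T.1⟩ : Tab3))
    exact tab_inj h
  · intro S
    apply Subtype.ext
    show pushStep^[a + b] ⟨a, b, (G a b S.1).2.2⟩ = S.1
    have he : (⟨a, b, (G a b S.1).2.2⟩ : Tab3) = G a b S.1 := rfl
    rw [he]
    have h1 := S.2.1
    have h2 := S.2.2.1
    exact pull_iter S.2.2.2 (a + b) a b h1 h2 (by omega)

end Stmt11
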